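/- Let ψ₁, ψ₂ : [0, ℓ] → ℝ be continuous functions (ℓ > 0) that never vanish simultaneously and are linearly independent (no nontrivial real linear combination α ψ₁ + β ψ₂ vanishes identically on [0, ℓ]). Then the 3×3 Gram matrix G with entries G_{ij} = ∫₀^ℓ f_i(s) f_j(s) ds, where f₁ = ψ₁², f₂ = ψ₁ψ₂, f₃ = ψ₂², is positive definite; in particular det G > 0. Consequently, the covariance matrix B of the Gaussian matrix entries in Lemma 1, whose entries are the integrals ∫₀^ℓ ψ_i ψ_j ψ_k ψ_m ds of fourth-order products of the fundamental solutions, is non-degenerate. -/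

import Mathlib

open Set MeasureTheory intervalIntegral Matrix

lemma cover_aux (ℓ : ℝ) (hℓ : 0 < ℓ) (ψ₁ ψ₂ : ℝ → ℝ)
    (hc₁ : ContinuousOn ψ₁ (Set.Icc 0 ℓ)) (hc₂ : ContinuousOn ψ₂ (Set.Icc 0 ℓ))
    (hnz : ∀ s ∈ Set.Icc (0:ℝ) ℓ, (ψ₁ s, ψ₂ s) ≠ (0, 0))
    (hindep : ∀ α β : ℝ, (∀ s ∈ Set.Icc (0:ℝ) ℓ, α * ψ₁ s + β * ψ₂ s = 0) →
      α = 0 ∧ β = 0)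
    (p q r t : ℝ) (hdet : p * t - q * r ≠ 0)
    (hprod : ∀ s ∈ Set.Icc (0:ℝ) ℓ, (p * ψ₁ s + q * ψ₂ s) * (r * ψ₁ s + t * ψ₂ s) = 0) :
    False := by
  set L₁ : ℝ → ℝ := fun s => p * ψ₁ s + q * ψ₂ s with hL₁
  set L₂ : ℝ → ℝ := fun s => r * ψ₁ s + t * ψ₂ s with hL₂
  have hcL₁ : ContinuousOn L₁ (Set.Icc 0 ℓ) :=
    (continuousOn_const.mul hc₁).add (continuousOn_const.mul hc₂)
  have hcL₂ : ContinuousOn L₂ (Set.Icc 0 ℓ) :=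
    (continuousOn_const.mul hc₁).add (continuousOn_const.mul hc₂)
  haveI : PreconnectedSpace (Set.Icc (0:ℝ) ℓ) :=
    Subtype.preconnectedSpace isPreconnected_Icc
  set A : Set (Set.Icc (0:ℝ) ℓ) := {x | L₁ x = 0} with hA
  set B : Set (Set.Icc (0:ℝ) ℓ) := {x | L₂ x = 0} with hB
  have hdisj : ∀ x : Set.Icc (0:ℝ) ℓ, ¬ (L₁ x = 0 ∧ L₂ x = 0) := by
    rintro x ⟨h1, h2⟩
    apply hnz x x.2
    have hx1 : (p * t - q * r) * ψ₁ x = 0 := by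
      simp only [hL₁, hL₂] at h1 h2; linear_combination t * h1 - q * h2
    have hx2 : (p * t - q * r) * ψ₂ x = 0 := by
      simp only [hL₁, hL₂] at h1 h2; linear_combination p * h2 - r * h1
    have e1 : ψ₁ x = 0 := by rcases mul_eq_zero.mp hx1 with h | h; exact absurd h hdet; exact h
    have e2 : ψ₂ x = 0 := by rcases mul_eq_zero.mp hx2 with h | h; exact absurd h hdet; exact h
    simp [e1, e2]
  have hcover : A ∪ B = Set.univ := by
    ext x; simp only [Set.mem_union, Set.mem_setOf_eq, Set.mem_univ, iff_true, hA, hB]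
    exact mul_eq_zero.mp (hprod x x.2)
  have hAclosed : IsClosed A := isClosed_eq hcL₁.restrict continuous_const
  have hBclosed : IsClosed B := isClosed_eq hcL₂.restrict continuous_const
  have hAB : A = Bᶜ := by
    ext x; simp only [Set.mem_compl_iff, Set.mem_setOf_eq, hA, hB]
    constructor
    · intro h1 h2; exact hdisj x ⟨h1, h2⟩
    · intro h2
      rcases mul_eq_zero.mp (hprod x x.2) with h | h
      · exact h
      · exact absurd h h2
  have hAopen : IsOpen A := by rw [hAB]; exact hBclosed.isOpen_compl
  rcases isClopen_iff.mp ⟨hAclosed, hAopen⟩ with hAe | hAu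
  · have hBu : ∀ s ∈ Set.Icc (0:ℝ) ℓ, r * ψ₁ s + t * ψ₂ s = 0 := by
      intro s hs
      have : (⟨s, hs⟩ : Set.Icc (0:ℝ) ℓ) ∉ A := by rw [hAe]; exact Set.notMem_empty _
      have hb : (⟨s, hs⟩ : Set.Icc (0:ℝ) ℓ) ∈ B := by
        have := hcover ▸ Set.mem_univ (⟨s, hs⟩ : Set.Icc (0:ℝ) ℓ)
        rcases (Set.mem_union _ _ _).mp this with h | h
        · exact absurd h ‹_›
        · exact h
      exact hb
    obtain ⟨hr, ht⟩ := hindep r t hBu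
    apply hdet; rw [hr, ht]; ring
  · have hAu' : ∀ s ∈ Set.Icc (0:ℝ) ℓ, p * ψ₁ s + q * ψ₂ s = 0 := by
      intro s hs
      have : (⟨s, hs⟩ : Set.Icc (0:ℝ) ℓ) ∈ A := by rw [hAu]; trivial
      exact this
    obtain ⟨hp, hq⟩ := hindep p q hAu'
    apply hdet; rw [hp, hq]; ring

lemma quad_zero (ℓ : ℝ) (hℓ : 0 < ℓ) (ψ₁ ψ₂ : ℝ → ℝ)
    (hc₁ : ContinuousOn ψ₁ (Set.Icc 0 ℓ)) (hc₂ : ContinuousOn ψ₂ (Set.Icc 0 ℓ))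
    (hnz : ∀ s ∈ Set.Icc (0:ℝ) ℓ, (ψ₁ s, ψ₂ s) ≠ (0, 0))
    (hindep : ∀ α β : ℝ, (∀ s ∈ Set.Icc (0:ℝ) ℓ, α * ψ₁ s + β * ψ₂ s = 0) →
      α = 0 ∧ β = 0)
    (a b c : ℝ)
    (h : ∀ s ∈ Set.Icc (0:ℝ) ℓ, a * ψ₁ s ^ 2 + b * (ψ₁ s * ψ₂ s) + c * ψ₂ s ^ 2 = 0) :
    a = 0 ∧ b = 0 ∧ c = 0 := by
  have h0mem : (0:ℝ) ∈ Set.Icc (0:ℝ) ℓ := ⟨le_refl 0, hℓ.le⟩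
  have h00 := h 0 h0mem
  have hnz0 := hnz 0 h0mem
  -- Discriminant nonneg
  have hD1 : 0 ≤ b ^ 2 - 4 * a * c := by
    by_contra hD
    push_neg at hD
    have ha : a ≠ 0 := by intro ha0; rw [ha0] at hD; nlinarith [sq_nonneg b]
    have key : (2 * a * ψ₁ 0 + b * ψ₂ 0) ^ 2 = (b ^ 2 - 4 * a * c) * (ψ₂ 0) ^ 2 := by
      linear_combination 4 * a * h00
    have hVsq : (ψ₂ 0) ^ 2 ≤ 0 := by nlinarith [sq_nonneg (2 * a * ψ₁ 0 + b * ψ₂ 0), sq_nonneg (ψ₂ 0)]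
    have hV : ψ₂ 0 = 0 := by
      have := le_antisymm hVsq (sq_nonneg _)
      exact pow_eq_zero_iff (two_ne_zero) |>.mp this
    have hU : ψ₁ 0 = 0 := by
      have : a * ψ₁ 0 ^ 2 = 0 := by rw [hV] at h00; linarith [h00]; 
      have h2 : ψ₁ 0 ^ 2 = 0 := by
        rcases mul_eq_zero.mp this with h' | h'; exact absurd h' ha; exact h'
      exact pow_eq_zero_iff (by norm_num) |>.mp h2
    exact hnz0 (by simp [hU, hV])
  -- Discriminant nonpos
  have hD2 : ¬ (0 < b ^ 2 - 4 * a * c) := by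
    intro hD
    set e := Real.sqrt (b ^ 2 - 4 * a * c) with hedef
    have he : e ^ 2 = b ^ 2 - 4 * a * c := Real.sq_sqrt hD.le
    have he0 : 0 < e := Real.sqrt_pos.mpr hD
    by_cases ha : a = 0
    · have hb : b ≠ 0 := by intro hb0; rw [ha, hb0] at hD; nlinarith
      apply cover_aux ℓ hℓ ψ₁ ψ₂ hc₁ hc₂ hnz hindep 0 1 b c
      · intro h'; apply hb; linarith [h']
      · intro s hs
        have := h s hs
        linear_combination this - ψ₁ s ^ 2 * ha
    · apply cover_aux ℓ hℓ ψ₁ ψ₂ hc₁ hc₂ hnz hindep (2*a) (b - e) (2*a) (b + e)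
      · intro h'
        apply ha
        have : 4 * a * e = 0 := by linarith [h']
        rcases mul_eq_zero.mp this with h'' | h''
        · rcases mul_eq_zero.mp h'' with h3 | h3
          · norm_num at h3
          · exact h3
        · exact absurd h'' he0.ne'
      · intro s hs
        linear_combination 4 * a * (h s hs) - (ψ₂ s) ^ 2 * he
  have hD : b ^ 2 - 4 * a * c = 0 := le_antisymm (not_lt.mp hD2) hD1
  by_cases ha : a = 0
  · have hb : b = 0 := by
      have : b ^ 2 = 0 := by rw [ha] at hD; linarith
      exact pow_eq_zero_iff (by norm_num) |>.mp this
    refine ⟨ha, hb, ?_⟩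
    by_contra hc0
    have := hindep 0 1 (fun s hs => by
      have hh := h s hs
      rw [ha, hb] at hh
      have : c * ψ₂ s ^ 2 = 0 := by linarith
      have h2 : ψ₂ s ^ 2 = 0 := by
        rcases mul_eq_zero.mp this with h' | h'; exact absurd h' hc0; exact h'
      have := pow_eq_zero_iff (two_ne_zero) |>.mp h2
      simp [this])
    exact one_ne_zero this.2
  · exfalso
    have hlin : ∀ s ∈ Set.Icc (0:ℝ) ℓ, (2*a) * ψ₁ s + b * ψ₂ s = 0 := by
      intro s hs
      have key : ((2*a) * ψ₁ s + b * ψ₂ s) ^ 2 = 0 := by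
        linear_combination 4 * a * (h s hs) + (ψ₂ s) ^ 2 * hD
      exact pow_eq_zero_iff (two_ne_zero) |>.mp key
    obtain ⟨h2a, _⟩ := hindep (2*a) b hlin
    apply ha; linarith

theorem stmt_7 (ℓ : ℝ) (hℓ : 0 < ℓ) (ψ₁ ψ₂ : ℝ → ℝ)
    (hc₁ : ContinuousOn ψ₁ (Set.Icc 0 ℓ)) (hc₂ : ContinuousOn ψ₂ (Set.Icc 0 ℓ))
    (hnz : ∀ s ∈ Set.Icc (0:ℝ) ℓ, (ψ₁ s, ψ₂ s) ≠ (0, 0))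
    (hindep : ∀ α β : ℝ, (∀ s ∈ Set.Icc (0:ℝ) ℓ, α * ψ₁ s + β * ψ₂ s = 0) →
      α = 0 ∧ β = 0)
    (f : Fin 3 → ℝ → ℝ)
    (hf : f = ![fun s => (ψ₁ s) ^ 2, fun s => ψ₁ s * ψ₂ s, fun s => (ψ₂ s) ^ 2])
    (G : Matrix (Fin 3) (Fin 3) ℝ)
    (hG : G = Matrix.of fun i j => ∫ s in (0:ℝ)..ℓ, f i s * f j s) :
    G.PosDef ∧ 0 < G.det := by
  have hcf : ∀ i, ContinuousOn (f i) (Set.Icc 0 ℓ) := by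
    intro i
    fin_cases i <;> simp only [hf, Matrix.cons_val_zero, Matrix.cons_val_one, Matrix.head_cons,
      Matrix.cons_val_two, Matrix.tail_cons]
    · exact hc₁.pow 2
    · exact hc₁.mul hc₂
    · exact hc₂.pow 2
  have hint : ∀ i j : Fin 3, IntervalIntegrable (fun s => f i s * f j s) volume 0 ℓ := by
    intro i j
    apply ContinuousOn.intervalIntegrable
    rw [Set.uIcc_of_le hℓ.le]
    exact (hcf i).mul (hcf j)
  -- quadratic form
  have hquad : ∀ x : Fin 3 → ℝ, x ≠ 0 → 0 < x ⬝ᵥ G *ᵥ x := by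
    intro x hx
    set g : ℝ → ℝ := fun s => x 0 * f 0 s + x 1 * f 1 s + x 2 * f 2 s with hgdef
    have hcg : ContinuousOn g (Set.Icc 0 ℓ) :=
      ((continuousOn_const.mul (hcf 0)).add (continuousOn_const.mul (hcf 1))).add
        (continuousOn_const.mul (hcf 2))
    have hgint : IntervalIntegrable (fun s => g s ^ 2) volume 0 ℓ := by
      apply ContinuousOn.intervalIntegrable
      rw [Set.uIcc_of_le hℓ.le]
      exact hcg.pow 2
    have hexp : ∀ s : ℝ, g s ^ 2 = ∑ p : Fin 3 × Fin 3, x p.1 * x p.2 * (f p.1 s * f p.2 s) := by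
      intro s
      simp only [hgdef, Fintype.sum_prod_type, Fin.sum_univ_three]
      ring
    have hkey : x ⬝ᵥ G *ᵥ x = ∫ s in (0:ℝ)..ℓ, g s ^ 2 := by
      calc x ⬝ᵥ G *ᵥ x
          = ∑ p : Fin 3 × Fin 3, x p.1 * x p.2 * ∫ s in (0:ℝ)..ℓ, f p.1 s * f p.2 s := by
            simp only [hG, dotProduct, Matrix.mulVec, Matrix.of_apply,
              Fintype.sum_prod_type, Fin.sum_univ_three]
            ring
        _ = ∑ p : Fin 3 × Fin 3, ∫ s in (0:ℝ)..ℓ, x p.1 * x p.2 * (f p.1 s * f p.2 s) := by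
            refine Finset.sum_congr rfl fun p _ => ?_
            rw [intervalIntegral.integral_const_mul]
        _ = ∫ s in (0:ℝ)..ℓ, ∑ p : Fin 3 × Fin 3, x p.1 * x p.2 * (f p.1 s * f p.2 s) := by
            rw [intervalIntegral.integral_finset_sum]
            exact fun p _ => (hint p.1 p.2).const_mul _
        _ = ∫ s in (0:ℝ)..ℓ, g s ^ 2 := by
            refine intervalIntegral.integral_congr fun s _ => ?_
            exact (hexp s).symm
    rw [hkey]
    have hnonneg : 0 ≤ ∫ s in (0:ℝ)..ℓ, g s ^ 2 :=
      intervalIntegral.integral_nonneg hℓ.le (fun s _ => sq_nonneg _)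
    rcases hnonneg.lt_or_eq with hpos | heq
    · exact hpos
    · exfalso
      -- integral is zero, deduce g = 0 on Icc
      have hzero : (fun s => g s ^ 2) =ᵐ[volume.restrict (Set.Ioc 0 ℓ)] 0 := by
        rw [← intervalIntegral.integral_eq_zero_iff_of_le_of_nonneg_ae hℓ.le
          (Filter.Eventually.of_forall fun s => sq_nonneg _) hgint]
        exact heq.symm
      have hzero' : (fun s => g s ^ 2) =ᵐ[volume.restrict (Set.Icc 0 ℓ)] 0 := by
        rwa [Measure.restrict_congr_set Ioc_ae_eq_Icc] at hzero
      have heqOn : Set.EqOn (fun s => g s ^ 2) 0 (Set.Icc 0 ℓ) :=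
        Measure.eqOn_Icc_of_ae_eq volume hℓ.ne hzero' (hcg.pow 2) continuousOn_const
      have hg0 : ∀ s ∈ Set.Icc (0:ℝ) ℓ, g s = 0 := by
        intro s hs
        have := heqOn hs
        simp only [Pi.zero_apply] at this
        exact pow_eq_zero_iff (two_ne_zero) |>.mp this
      have := quad_zero ℓ hℓ ψ₁ ψ₂ hc₁ hc₂ hnz hindep (x 0) (x 1) (x 2) (by
        intro s hs
        have := hg0 s hs
        simp only [hgdef, hf, Matrix.cons_val_zero, Matrix.cons_val_one, Matrix.head_cons,
          Matrix.cons_val_two, Matrix.tail_cons] at this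
        linarith [this])
      apply hx
      funext i
      fin_cases i
      · exact this.1
      · exact this.2.1
      · exact this.2.2
  have hherm : G.IsHermitian := by
    unfold Matrix.IsHermitian
    ext i j
    simp only [hG, Matrix.conjTranspose_apply, Matrix.of_apply, star_trivial]
    congr 1
    funext s
    ring
  have hpd : G.PosDef := Matrix.posDef_iff_dotProduct_mulVec.mpr ⟨hherm, fun x hx => by simpa using hquad x hx⟩
  exact ⟨hpd, hpd.det_pos⟩
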